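/- Let S be a uniserial commutative semiring, i.e., the ideals of S are linearly ordered by inclusion: for all ideals I, J of S, either I ≤ J or J ≤ I. Then S is classical (every element is either a unit or a zero-divisor) if and only if for every b ∈ S the double annihilator of b equals the principal ideal generated by b, i.e., { t ∈ S : for all s ∈ S, s*b = 0 implies t*s = 0 } = Ideal.span {b} (as sets). -/

import Mathlib

/-- A uniserial commutative semiring `S` is classical if and only if
`Ann Ann (b) = (b)` for all `b ∈ S`. -/
theorem stmt_11 {S : Type*} [CommSemiring S]
    (huni : ∀ I J : Ideal S, I ≤ J ∨ J ≤ I) :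
    (∀ a : S, IsUnit a ∨ ∃ b ≠ (0 : S), a * b = 0) ↔
      (∀ b : S, {t : S | ∀ s : S, s * b = 0 → t * s = 0} =
        ((Ideal.span {b} : Ideal S) : Set S)) := by
  constructor
  · intro hcl b
    ext t
    simp only [Set.mem_setOf_eq, SetLike.mem_coe]
    constructor
    · intro ht
      rcases huni (Ideal.span {t}) (Ideal.span {b}) with h | h
      · exact h (Ideal.subset_span rfl)
      · obtain ⟨d, hd⟩ := Ideal.mem_span_singleton'.mp (h (Ideal.subset_span rfl))
        rcases hcl d with hu | ⟨e, he0, hde⟩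
        · obtain ⟨u, rfl⟩ := hu
          refine Ideal.mem_span_singleton'.mpr ⟨(↑u⁻¹ : S), ?_⟩
          rw [← hd, ← mul_assoc]
          simp
        · rcases huni (Ideal.span {e}) (Ideal.span {t}) with h2 | h2
          · obtain ⟨c, hc⟩ := Ideal.mem_span_singleton'.mp (h2 (Ideal.subset_span rfl))
            have hcb : c * b = 0 := by
              rw [← hd]
              calc c * (d * t) = d * (c * t) := by ring
                _ = d * e := by rw [hc]
                _ = 0 := hde
            have : t * c = 0 := ht c hcb
            exact absurd (by rw [← hc, mul_comm]; exact this) he0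
          · obtain ⟨f, hf⟩ := Ideal.mem_span_singleton'.mp (h2 (Ideal.subset_span rfl))
            have hb0 : b = 0 := by
              rw [← hd, ← hf]
              calc d * (f * e) = f * (d * e) := by ring
                _ = 0 := by rw [hde, mul_zero]
            have ht0 : t = 0 := by
              have := ht 1 (by rw [one_mul, hb0])
              simpa using this
            rw [ht0]
            exact (Ideal.span {b}).zero_mem
    · intro ht s hs
      obtain ⟨c, hc⟩ := Ideal.mem_span_singleton'.mp ht
      rw [← hc]
      calc c * b * s = c * (s * b) := by ring
        _ = 0 := by rw [hs, mul_zero]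
  · intro h a
    by_cases hz : ∃ b ≠ (0 : S), a * b = 0
    · exact Or.inr hz
    · left
      have h1 : (1 : S) ∈ {t : S | ∀ s : S, s * a = 0 → t * s = 0} := by
        intro s hs
        by_cases hs0 : s = 0
        · rw [hs0, mul_zero]
        · exact absurd ⟨s, hs0, by rw [mul_comm]; exact hs⟩ hz
      rw [h a] at h1
      obtain ⟨c, hc⟩ := Ideal.mem_span_singleton'.mp h1
      exact IsUnit.of_mul_eq_one (a := a) c (by rw [mul_comm]; exact hc)
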